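/- Let L_1, …, L_n be pairwise commuting square complex matrices, p ∈ ℝ^m, and L(p) = ∑_k f_k(p) • L_k for functions f_k : ℝ^m → ℝ. Then for any X = exp(L(p)) * (∑_k a_k • L_k) and Y = exp(L(p)) * (∑_k b_k • L_k) with a, b ∈ ℝ^n, the sectional-curvature value κ(X,Y) computed from the orthonormal formula, namely (1/4) · g(⁅X,Y⁆, ⁅X,Y⁆), equals 0. Hence a commutative encoding scheme has flat curvature. (Paper's final Claim in Section IV.) -/

import Mathlib

open NormedSpace Matrix

/-- A commutative encoding scheme is flat: for tangent vectors
`X = exp (L p) * (∑ k, a k • L k)` and `Y = exp (L p) * (∑ k, b k • L k)`, the sectional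
curvature value `(1/4) · g(⁅X,Y⁆, ⁅X,Y⁆)` (with `g(H,K) = (Tr(Hᴴ*K) + Tr(Kᴴ*H))/(2N)`,
`N` the cardinality of the matrix index type) equals `0`. -/
theorem commutative_feature_map_flat_curvature
    {ι : Type*} [Fintype ι] [DecidableEq ι] [Nonempty ι]
    {N m : ℕ} (L : Fin N → Matrix ι ι ℂ)
    (hcomm : ∀ i j, L i * L j = L j * L i)
    (f : Fin N → (Fin m → ℝ) → ℝ) (p : Fin m → ℝ)
    (a b : Fin N → ℝ)
    (X Y : Matrix ι ι ℂ)
    (hX : X = exp (∑ k, f k p • L k) * ∑ k, a k • L k)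
    (hY : Y = exp (∑ k, f k p • L k) * ∑ k, b k • L k) :
    (1 / 4 : ℂ) *
      ((Matrix.trace (⁅X, Y⁆ᴴ * ⁅X, Y⁆) + Matrix.trace (⁅X, Y⁆ᴴ * ⁅X, Y⁆)) /
        (2 * (Fintype.card ι : ℂ))) = 0 := by
  have key : ∀ (c d : Fin N → ℝ), Commute (∑ k, c k • L k) (∑ k, d k • L k) := by
    intro c d
    apply Commute.sum_left
    intro i _
    apply Commute.sum_right
    intro j _
    exact (Commute.smul_left (Commute.smul_right (hcomm i j) _) _)
  have hE : ∀ (c : Fin N → ℝ),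
      Commute (exp (∑ k, f k p • L k)) (∑ k, c k • L k) := fun c =>
    (key _ c).exp_left
  have hXY : Commute X Y := by
    rw [hX, hY]
    exact ((Commute.refl _).mul_right (hE b)).mul_left
      (((hE a).symm).mul_right (key a b))
  have : ⁅X, Y⁆ = 0 := by
    rw [Ring.lie_def, hXY.eq, sub_self]
  simp [this]
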